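/- Let f : [0,∞) → (0,∞) be measurable and locally integrable with ∫_0^∞ f(u) du = ∞. Define H(t) = inf{s ≥ 0 : ∫_0^s f(u) du > t} for t ≥ 0, and η(t) = inf{s ≥ 0 : ∫_0^s f(H(r))^{−2} dr > t}. Then for every t with 0 ≤ t < ∫_0^∞ f(u)^{−1} du, one has H(η(t)) = inf{s ≥ 0 : ∫_0^s f(u)^{−1} du > t}. (Taking f = exp(αξ) this is the time-change identity H∘η_t = inf{s : ∫_0^s e^{−αξ_u} du > t} at the heart of the Riesz–Bogdan–Żak transform.) -/

import Mathlib

open MeasureTheory Filter Set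
open scoped ENNReal


lemma rbz_sup_Ioc (h : ℝ → ℝ≥0∞) (hm : Measurable h) :
    ∫⁻ u in Set.Ioi (0:ℝ), h u = ⨆ n : ℕ, ∫⁻ u in Set.Ioc (0:ℝ) (n:ℝ), h u := by
  have key : ∀ u : ℝ, (Set.Ioi (0:ℝ)).indicator h u
      = ⨆ n : ℕ, (Set.Ioc (0:ℝ) (n:ℝ)).indicator h u := by
    intro u
    rcases le_or_gt u 0 with hu | hu
    · rw [Set.indicator_of_notMem (by simpa using hu)]
      symm
      simp only [ENNReal.iSup_eq_zero]
      intro n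
      exact Set.indicator_of_notMem (fun hmem => absurd hmem.1 (not_lt.2 hu)) _
    · rw [Set.indicator_of_mem (Set.mem_Ioi.2 hu)]
      apply le_antisymm
      · obtain ⟨n, hn⟩ := exists_nat_ge u
        exact le_iSup_of_le n (le_of_eq (Set.indicator_of_mem (Set.mem_Ioc.2 ⟨hu, hn⟩) h).symm)
      · exact iSup_le fun n => Set.indicator_le_self _ _ u
  calc ∫⁻ u in Set.Ioi (0:ℝ), h u
      = ∫⁻ u, (Set.Ioi (0:ℝ)).indicator h u := (lintegral_indicator measurableSet_Ioi _).symm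
    _ = ∫⁻ u, ⨆ n : ℕ, (Set.Ioc (0:ℝ) (n:ℝ)).indicator h u := by
        congr 1; funext u; exact key u
    _ = ⨆ n : ℕ, ∫⁻ u, (Set.Ioc (0:ℝ) (n:ℝ)).indicator h u := by
        refine lintegral_iSup (fun n => hm.indicator measurableSet_Ioc) ?_
        intro n m hnm
        exact fun u => Set.indicator_le_indicator_of_subset
          (Set.Ioc_subset_Ioc le_rfl (by exact_mod_cast hnm)) (fun _ => zero_le) u
    _ = ⨆ n : ℕ, ∫⁻ u in Set.Ioc (0:ℝ) (n:ℝ), h u := by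
        simp_rw [lintegral_indicator measurableSet_Ioc]

/-- Let `f : [0,∞) → (0,∞)` be measurable and locally integrable with
`∫_0^∞ f = ∞`. With `H(t) = inf{s ≥ 0 : ∫_0^s f > t}` and
`η(t) = inf{s ≥ 0 : ∫_0^s f(H(r))^{−2} dr > t}`, for every `t` with
`0 ≤ t < ∫_0^∞ f(u)^{−1} du` one has `H(η(t)) = inf{s ≥ 0 : ∫_0^s f(u)^{−1} du > t}`.
(The time-change identity at the heart of the Riesz–Bogdan–Żak transform.) -/
theorem riesz_bogdan_zak_time_change
    (f : ℝ → ℝ) (hmeas : Measurable f)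
    (hpos : ∀ u : ℝ, 0 ≤ u → 0 < f u)
    (hloc : ∀ s : ℝ, 0 ≤ s → ∫⁻ u in Set.Ioc 0 s, ENNReal.ofReal (f u) < ⊤)
    (htot : ∫⁻ u in Set.Ioi (0 : ℝ), ENNReal.ofReal (f u) = ⊤)
    (H : ℝ → ℝ)
    (hH : ∀ t : ℝ, H t
      = sInf {s : ℝ | 0 ≤ s ∧
          ENNReal.ofReal t < ∫⁻ u in Set.Ioc 0 s, ENNReal.ofReal (f u)})
    (η : ℝ → ℝ)
    (hη : ∀ t : ℝ, η t
      = sInf {s : ℝ | 0 ≤ s ∧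
          ENNReal.ofReal t < ∫⁻ r in Set.Ioc 0 s, ENNReal.ofReal ((f (H r) ^ 2)⁻¹)}) :
    ∀ t : ℝ, 0 ≤ t →
      ENNReal.ofReal t < ∫⁻ u in Set.Ioi (0 : ℝ), ENNReal.ofReal (f u)⁻¹ →
      H (η t)
        = sInf {s : ℝ | 0 ≤ s ∧
            ENNReal.ofReal t < ∫⁻ u in Set.Ioc 0 s, ENNReal.ofReal (f u)⁻¹} := by
  set g : ℝ → ℝ := (Set.Ioi (0:ℝ)).indicator f with hg_def
  have hg_meas : Measurable g := hmeas.indicator measurableSet_Ioi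
  have hg_nonneg : ∀ u, 0 ≤ g u := by
    intro u
    rcases le_or_gt u 0 with hu | hu
    · simp [hg_def, Set.indicator_of_notMem (by simpa using hu : u ∉ Set.Ioi (0:ℝ))]
    · simp [hg_def, Set.indicator_of_mem (Set.mem_Ioi.2 hu), (hpos u hu.le).le]
  -- integrability of f on Ioc 0 c
  have hint_f : ∀ c : ℝ, IntegrableOn f (Set.Ioc 0 c) := by
    intro c
    rcases le_or_gt c 0 with hc | hc
    · rw [Set.Ioc_eq_empty (by exact fun h => absurd (h.trans_le hc) (lt_irrefl 0))]
      exact integrableOn_empty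
    · constructor
      · exact hmeas.aestronglyMeasurable.restrict
      · rw [hasFiniteIntegral_iff_norm]
        have : ∀ᵐ u ∂(volume.restrict (Set.Ioc (0:ℝ) c)), ENNReal.ofReal ‖f u‖ = ENNReal.ofReal (f u) := by
          refine (ae_restrict_iff' measurableSet_Ioc).2 (ae_of_all _ fun u hu => ?_)
          rw [Real.norm_eq_abs, abs_of_pos (hpos u hu.1.le)]
        rw [lintegral_congr_ae this]
        exact hloc c hc.le
  have hg_int : ∀ a b : ℝ, IntervalIntegrable g volume a b := by
    intro a b
    rw [intervalIntegrable_iff]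
    rw [hg_def, IntegrableOn, integrable_indicator_iff measurableSet_Ioi, IntegrableOn,
      Measure.restrict_restrict measurableSet_Ioi]
    refine (hint_f (max a b)).mono_set ?_
    rintro u ⟨hu1, hu2⟩
    rw [Set.mem_uIoc] at hu2
    refine ⟨hu1, ?_⟩
    rcases hu2 with h | h
    exacts [h.2.trans (le_max_right _ _), h.2.trans (le_max_left _ _)]
  -- the primitive F
  set F : ℝ → ℝ := fun x => ∫ u in (0:ℝ)..x, g u with hF_def
  have hFcont : Continuous F := intervalIntegral.continuous_primitive hg_int 0
  have hF0 : F 0 = 0 := intervalIntegral.integral_same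
  have hFadd : ∀ a b : ℝ, F a + ∫ u in a..b, g u = F b := by
    intro a b
    exact intervalIntegral.integral_add_adjacent_intervals (hg_int 0 a) (hg_int a b)
  have hFmono : Monotone F := by
    intro a b hab
    have := hFadd a b
    nlinarith [intervalIntegral.integral_nonneg (μ := volume) hab (fun u _ => hg_nonneg u)]
  have hFnonneg : ∀ x, 0 ≤ F x := by
    intro x
    rcases le_or_gt x 0 with hx | hx
    · have : F x ≤ F 0 := hFmono hx
      rw [hF0] at this
      -- But g = 0 on (x,0]! since u ≤ 0 not in Ioi 0. So F x = 0.
      have : F x = 0 := by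
        rw [hF_def]
        simp only
        rw [intervalIntegral.integral_of_ge hx]
        rw [MeasureTheory.setIntegral_eq_zero_of_forall_eq_zero]
        · ring
        · intro u hu
          exact Set.indicator_of_notMem (by simp only [Set.mem_Ioi, not_lt]; exact hu.2) f
      linarith
    · rw [← hF0]; exact hFmono hx.le
  -- link with lintegral
  have hgf_Ioc : ∀ c : ℝ, ∀ u ∈ Set.Ioc (0:ℝ) c, g u = f u := fun c u hu =>
    Set.indicator_of_mem (Set.mem_Ioi.2 hu.1) f
  have hFofReal : ∀ x : ℝ, 0 ≤ x →
      ENNReal.ofReal (F x) = ∫⁻ u in Set.Ioc 0 x, ENNReal.ofReal (f u) := by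
    intro x hx
    have h1 : F x = ∫ u in Set.Ioc (0:ℝ) x, g u := intervalIntegral.integral_of_le hx
    have h2 : IntegrableOn g (Set.Ioc (0:ℝ) x) := by
      rw [← Set.uIoc_of_le hx]
      exact (hg_int 0 x).def'
    rw [h1, MeasureTheory.ofReal_integral_eq_lintegral_ofReal h2
      (ae_of_all _ (fun u => hg_nonneg u))]
    refine setLIntegral_congr_fun measurableSet_Ioc (fun u hu => ?_)
    rw [hgf_Ioc x u hu]
  -- strict monotonicity on [0,∞)
  have hFstrict : ∀ a b : ℝ, 0 ≤ a → a < b → F a < F b := by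
    intro a b ha hab
    have hint : IntegrableOn g (Set.Ioc a b) := by
      rw [← Set.uIoc_of_le hab.le]
      exact (hg_int a b).def'
    have hpos' : 0 < ∫ u in Set.Ioc a b, g u := by
      rw [setIntegral_pos_iff_support_of_nonneg_ae (ae_of_all _ (fun u => hg_nonneg u)) hint]
      have hsub : Set.Ioc a b ⊆ Function.support g ∩ Set.Ioc a b := by
        intro u hu
        refine ⟨?_, hu⟩
        have hu0 : 0 < u := lt_of_le_of_lt ha hu.1
        simp only [Function.mem_support, hg_def,
          Set.indicator_of_mem (Set.mem_Ioi.2 hu0)]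
        exact (hpos u hu0.le).ne'
      calc (0:ℝ≥0∞) < volume (Set.Ioc a b) := by
            simp [Real.volume_Ioc, hab]
        _ ≤ volume (Function.support g ∩ Set.Ioc a b) := measure_mono hsub
    have := hFadd a b
    rw [intervalIntegral.integral_of_le hab.le] at this
    linarith
  have hFunbdd : ∀ M : ℝ, ∃ x : ℝ, 0 ≤ x ∧ M < F x := by
    intro M
    by_contra hcon
    push_neg at hcon
    have : ∫⁻ u in Set.Ioi (0:ℝ), ENNReal.ofReal (f u) ≤ ENNReal.ofReal M := by
      rw [rbz_sup_Ioc _ (hmeas.ennreal_ofReal)]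
      refine iSup_le fun n => ?_
      rw [← hFofReal (n:ℝ) (by positivity)]
      exact ENNReal.ofReal_le_ofReal (hcon (n:ℝ) (by positivity))
    rw [htot] at this
    exact absurd this (by simp)
  have hFsurj : ∀ t : ℝ, 0 ≤ t → ∃ x : ℝ, 0 ≤ x ∧ F x = t := by
    intro t ht
    obtain ⟨y, hy0, hyt⟩ := hFunbdd t
    have : t ∈ Set.Icc (F 0) (F y) := ⟨by rwa [hF0], hyt.le⟩
    obtain ⟨x, hx, hFx⟩ := intermediate_value_Icc hy0 hFcont.continuousOn this
    exact ⟨x, hx.1, hFx⟩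
  -- H inverts F
  have hHF : ∀ x : ℝ, 0 ≤ x → H (F x) = x := by
    intro x hx
    rw [hH]
    have hset : {s : ℝ | 0 ≤ s ∧
        ENNReal.ofReal (F x) < ∫⁻ u in Set.Ioc 0 s, ENNReal.ofReal (f u)} = Set.Ioi x := by
      ext s
      simp only [Set.mem_setOf_eq, Set.mem_Ioi]
      constructor
      · rintro ⟨hs0, hlt⟩
        rw [← hFofReal s hs0] at hlt
        have hFlt : F x < F s := by
          by_contra hle
          push_neg at hle
          exact absurd (ENNReal.ofReal_le_ofReal hle) (not_le.2 hlt)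
        by_contra hsx
        push_neg at hsx
        exact absurd (hFmono hsx) (not_le.2 hFlt)
      · intro hxs
        have hs0 : 0 ≤ s := hx.trans hxs.le
        refine ⟨hs0, ?_⟩
        rw [← hFofReal s hs0]
        exact ENNReal.ofReal_lt_ofReal_iff_of_nonneg (hFnonneg x) |>.2 (hFstrict x s hx hxs)
    rw [hset]
    exact csInf_Ioi
  have hHinv : ∀ t : ℝ, 0 ≤ t → 0 ≤ H t ∧ F (H t) = t := by
    intro t ht
    obtain ⟨x, hx0, hFx⟩ := hFsurj t ht
    rw [← hFx, hHF x hx0]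
    exact ⟨hx0, rfl⟩
  have hSne : ∀ t : ℝ, Set.Nonempty {s : ℝ | 0 ≤ s ∧
      ENNReal.ofReal t < ∫⁻ u in Set.Ioc 0 s, ENNReal.ofReal (f u)} := by
    intro t
    obtain ⟨x, hx0, hxt⟩ := hFunbdd (max t 0)
    refine ⟨x, hx0, ?_⟩
    rw [← hFofReal x hx0]
    calc ENNReal.ofReal t ≤ ENNReal.ofReal (max t 0) := ENNReal.ofReal_le_ofReal (le_max_left _ _)
      _ < ENNReal.ofReal (F x) :=
        (ENNReal.ofReal_lt_ofReal_iff_of_nonneg (le_max_right _ _)).2 hxt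
  have hHmono : Monotone H := by
    intro t1 t2 h12
    rw [hH t1, hH t2]
    refine csInf_le_csInf ⟨0, fun s hs => hs.1⟩ (hSne t2) ?_
    rintro s ⟨hs0, hlt⟩
    exact ⟨hs0, lt_of_le_of_lt (ENNReal.ofReal_le_ofReal h12) hlt⟩
  have hHmeas : Measurable H := hHmono.measurable
  have hHnonneg : ∀ t, 0 ≤ H t := by
    intro t
    rw [hH t]
    exact le_csInf (hSne t) (fun s hs => hs.1)
  have hHle : ∀ t x : ℝ, 0 ≤ t → 0 ≤ x → (H t ≤ x ↔ t ≤ F x) := by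
    intro t x ht hx
    obtain ⟨x', hx'0, hFx'⟩ := hFsurj t ht
    rw [← hFx', hHF x' hx'0]
    constructor
    · intro h; exact hFmono h
    · intro h
      by_contra hc
      push_neg at hc
      exact absurd h (not_le.2 (hFstrict x x' hx hc))
  have hHpos : ∀ r : ℝ, 0 < r → 0 < H r := by
    intro r hr
    obtain ⟨h0, hFHr⟩ := hHinv r hr.le
    rcases eq_or_lt_of_le h0 with h | h
    · exfalso
      rw [← h, hF0] at hFHr
      exact absurd hFHr.symm (ne_of_gt hr)
    · exact h
  have hFdiff : ∀ a b : ℝ, 0 ≤ a → a ≤ b →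
      ∫⁻ u in Set.Ioc a b, ENNReal.ofReal (f u) = ENNReal.ofReal (F b - F a) := by
    intro a b ha hab
    have hint : IntegrableOn g (Set.Ioc a b) := by
      rw [← Set.uIoc_of_le hab]
      exact (hg_int a b).def'
    have h1 : F b - F a = ∫ u in Set.Ioc a b, g u := by
      have := hFadd a b
      rw [intervalIntegral.integral_of_le hab] at this
      linarith
    rw [h1, MeasureTheory.ofReal_integral_eq_lintegral_ofReal hint
      (ae_of_all _ (fun u => hg_nonneg u))]
    refine (setLIntegral_congr_fun measurableSet_Ioc (fun u hu => ?_)).symm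
    rw [hg_def]
    rw [Set.indicator_of_mem (Set.mem_Ioi.2 (lt_of_le_of_lt ha hu.1)) f]
  set μ0 := volume.restrict (Set.Ioi (0:ℝ)) with hμ0_def
  have hmapIoc : ∀ a b : ℝ, a < b → (Measure.map H μ0) (Set.Ioc a b)
      = (μ0.withDensity (fun u => ENNReal.ofReal (f u))) (Set.Ioc a b)
      ∧ (Measure.map H μ0) (Set.Ioc a b) ≠ ⊤ := by
    intro a b hab
    have hL : (Measure.map H μ0) (Set.Ioc a b) = volume ((H ⁻¹' Set.Ioc a b) ∩ Set.Ioi 0) := by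
      rw [Measure.map_apply hHmeas measurableSet_Ioc, hμ0_def,
        Measure.restrict_apply (hHmeas measurableSet_Ioc)]
    have hR : (μ0.withDensity (fun u => ENNReal.ofReal (f u))) (Set.Ioc a b)
        = ∫⁻ u in Set.Ioc a b ∩ Set.Ioi 0, ENNReal.ofReal (f u) := by
      rw [withDensity_apply _ measurableSet_Ioc, hμ0_def,
        Measure.restrict_restrict measurableSet_Ioc]
    rcases le_or_gt b 0 with hb | hb
    · have h1 : (H ⁻¹' Set.Ioc a b) ∩ Set.Ioi 0 = ∅ := by
        ext r
        simp only [Set.mem_inter_iff, Set.mem_preimage, Set.mem_Ioc, Set.mem_Ioi,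
          Set.mem_empty_iff_false, iff_false, not_and, and_imp]
        intro _ hHb hr
        exact absurd hHb (not_le.2 (lt_of_le_of_lt hb (hHpos r hr)))
      have h2 : Set.Ioc a b ∩ Set.Ioi 0 = ∅ := by
        ext r
        simp only [Set.mem_inter_iff, Set.mem_Ioc, Set.mem_Ioi,
          Set.mem_empty_iff_false, iff_false, not_and, and_imp]
        intro _ hrb hr
        exact absurd hrb (not_le.2 (lt_of_le_of_lt hb hr))
      rw [hL, hR, h1, h2]
      simp
    rcases lt_or_ge a 0 with ha | ha
    · have h1 : (H ⁻¹' Set.Ioc a b) ∩ Set.Ioi 0 = Set.Ioc 0 (F b) := by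
        ext r
        simp only [Set.mem_inter_iff, Set.mem_preimage, Set.mem_Ioc, Set.mem_Ioi]
        constructor
        · rintro ⟨⟨_, hHb⟩, hr⟩
          exact ⟨hr, (hHle r b hr.le hb.le).1 hHb⟩
        · rintro ⟨hr, hrFb⟩
          exact ⟨⟨lt_of_lt_of_le ha (hHnonneg r), (hHle r b hr.le hb.le).2 hrFb⟩, hr⟩
      have h2 : Set.Ioc a b ∩ Set.Ioi 0 = Set.Ioc 0 b := by
        ext r
        simp only [Set.mem_inter_iff, Set.mem_Ioc, Set.mem_Ioi]
        constructor
        · rintro ⟨⟨_, hrb⟩, hr⟩; exact ⟨hr, hrb⟩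
        · rintro ⟨hr, hrb⟩; exact ⟨⟨lt_of_lt_of_le ha hr.le, hrb⟩, hr⟩
      rw [hL, hR, h1, h2, Real.volume_Ioc, ← hFofReal b hb.le, sub_zero]
      exact ⟨rfl, ENNReal.ofReal_ne_top⟩
    · have h1 : (H ⁻¹' Set.Ioc a b) ∩ Set.Ioi 0 = Set.Ioc (F a) (F b) := by
        ext r
        simp only [Set.mem_inter_iff, Set.mem_preimage, Set.mem_Ioc, Set.mem_Ioi]
        constructor
        · rintro ⟨⟨hHa, hHb⟩, hr⟩
          refine ⟨?_, (hHle r b hr.le (ha.trans hab.le)).1 hHb⟩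
          by_contra hc
          push_neg at hc
          exact absurd ((hHle r a hr.le ha).2 hc) (not_le.2 hHa)
        · rintro ⟨hFa, hFb⟩
          have hr : 0 < r := lt_of_le_of_lt (hFnonneg a) hFa
          refine ⟨⟨?_, (hHle r b hr.le (ha.trans hab.le)).2 hFb⟩, hr⟩
          by_contra hc
          push_neg at hc
          exact absurd ((hHle r a hr.le ha).1 hc) (not_le.2 hFa)
      have h2 : Set.Ioc a b ∩ Set.Ioi 0 = Set.Ioc a b := by
        refine Set.inter_eq_left.2 (fun r hr => Set.mem_Ioi.2 (lt_of_le_of_lt ha hr.1))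
      rw [hL, hR, h1, h2, Real.volume_Ioc, hFdiff a b ha hab.le]
      exact ⟨rfl, ENNReal.ofReal_ne_top⟩
  have hmap : Measure.map H μ0 = μ0.withDensity (fun u => ENNReal.ofReal (f u)) :=
    Measure.ext_of_Ioc' _ _ (fun a b hab => (hmapIoc a b hab).2)
      (fun a b hab => (hmapIoc a b hab).1)
  -- change of variables
  have hψmeas : Measurable (fun v : ℝ => ENNReal.ofReal ((f v ^ 2)⁻¹)) :=
    ((hmeas.pow_const 2).inv).ennreal_ofReal
  have hlemA : ∀ s : ℝ, 0 ≤ s →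
      ∫⁻ r in Set.Ioc 0 s, ENNReal.ofReal ((f (H r) ^ 2)⁻¹)
        = ∫⁻ u in Set.Ioc 0 (H s), ENNReal.ofReal (f u)⁻¹ := by
    intro s hs
    set φ : ℝ → ℝ≥0∞ :=
      (Set.Ioc 0 (H s)).indicator (fun v => ENNReal.ofReal ((f v ^ 2)⁻¹)) with hφ_def
    have hφmeas : Measurable φ := hψmeas.indicator measurableSet_Ioc
    have step1 : ∫⁻ r in Set.Ioc 0 s, ENNReal.ofReal ((f (H r) ^ 2)⁻¹)
        = ∫⁻ r in Set.Ioi (0:ℝ), φ (H r) := by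
      have hIocsub : Set.Ioc (0:ℝ) s ∩ Set.Ioi 0 = Set.Ioc 0 s :=
        Set.inter_eq_left.2 (fun r hr => hr.1)
      symm
      calc ∫⁻ r in Set.Ioi (0:ℝ), φ (H r)
          = ∫⁻ r in Set.Ioi (0:ℝ),
              (Set.Ioc (0:ℝ) s).indicator (fun r => ENNReal.ofReal ((f (H r) ^ 2)⁻¹)) r := ?_
        _ = ∫⁻ r in Set.Ioc (0:ℝ) s, ENNReal.ofReal ((f (H r) ^ 2)⁻¹) := by
            rw [lintegral_indicator measurableSet_Ioc,
              Measure.restrict_restrict measurableSet_Ioc, hIocsub]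
      refine setLIntegral_congr_fun measurableSet_Ioi (fun r hr => ?_)
      have hr0 : (0:ℝ) < r := hr
      have hiff : H r ∈ Set.Ioc 0 (H s) ↔ r ∈ Set.Ioc (0:ℝ) s := by
        simp only [Set.mem_Ioc]
        constructor
        · rintro ⟨_, hle⟩
          refine ⟨hr0, ?_⟩
          have := (hHle r (H s) hr0.le (hHnonneg s)).1 hle
          rwa [(hHinv s hs).2] at this
        · rintro ⟨_, hrs⟩
          refine ⟨hHpos r hr0, ?_⟩
          refine (hHle r (H s) hr0.le (hHnonneg s)).2 ?_
          rwa [(hHinv s hs).2]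
      rcases Classical.em (r ∈ Set.Ioc (0:ℝ) s) with hmem | hmem
      · rw [Set.indicator_of_mem hmem, hφ_def, Set.indicator_of_mem (hiff.2 hmem)]
      · rw [Set.indicator_of_notMem hmem, hφ_def,
          Set.indicator_of_notMem (fun h => hmem (hiff.1 h))]
    have step2 : ∫⁻ r in Set.Ioi (0:ℝ), φ (H r)
        = ∫⁻ v, (fun u => ENNReal.ofReal (f u)) v * φ v ∂μ0 := by
      rw [← lintegral_map hφmeas hHmeas, hmap,
        lintegral_withDensity_eq_lintegral_mul _ hmeas.ennreal_ofReal hφmeas]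
      rfl
    have step3 : ∫⁻ v, (fun u => ENNReal.ofReal (f u)) v * φ v ∂μ0
        = ∫⁻ v in Set.Ioc 0 (H s), ENNReal.ofReal (f v) * ENNReal.ofReal ((f v ^ 2)⁻¹) := by
      have : ∀ v, (fun u => ENNReal.ofReal (f u)) v * φ v
          = (Set.Ioc 0 (H s)).indicator
              (fun v => ENNReal.ofReal (f v) * ENNReal.ofReal ((f v ^ 2)⁻¹)) v := by
        intro v
        rcases Classical.em (v ∈ Set.Ioc (0:ℝ) (H s)) with hmem | hmem
        · rw [hφ_def, Set.indicator_of_mem hmem, Set.indicator_of_mem hmem]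
        · rw [hφ_def, Set.indicator_of_notMem hmem, Set.indicator_of_notMem hmem, mul_zero]
      have hinter : Set.Ioc (0:ℝ) (H s) ∩ Set.Ioi 0 = Set.Ioc (0:ℝ) (H s) :=
        Set.inter_eq_left.2 (fun v hv => hv.1)
      rw [lintegral_congr this, lintegral_indicator measurableSet_Ioc, hμ0_def,
        Measure.restrict_restrict measurableSet_Ioc, hinter]
    have step4 : ∫⁻ v in Set.Ioc 0 (H s), ENNReal.ofReal (f v) * ENNReal.ofReal ((f v ^ 2)⁻¹)
        = ∫⁻ u in Set.Ioc 0 (H s), ENNReal.ofReal (f u)⁻¹ := by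
      refine setLIntegral_congr_fun measurableSet_Ioc (fun v hv => ?_)
      have hfv : 0 < f v := hpos v hv.1.le
      rw [← ENNReal.ofReal_mul hfv.le]
      congr 1
      field_simp
    rw [step1, step2, step3, step4]
  -- final argument
  intro t ht htlt
  set T := {x : ℝ | 0 ≤ x ∧
      ENNReal.ofReal t < ∫⁻ u in Set.Ioc 0 x, ENNReal.ofReal (f u)⁻¹} with hT_def
  have hTne : T.Nonempty := by
    rw [hμ0_def, rbz_sup_Ioc (fun u => ENNReal.ofReal (f u)⁻¹) hmeas.inv.ennreal_ofReal, lt_iSup_iff] at htlt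
    obtain ⟨n, hn⟩ := htlt
    exact ⟨(n:ℝ), by positivity, hn⟩
  have hTbdd : BddBelow T := ⟨0, fun x hx => hx.1⟩
  have hSeq : {s : ℝ | 0 ≤ s ∧
      ENNReal.ofReal t < ∫⁻ r in Set.Ioc 0 s, ENNReal.ofReal ((f (H r) ^ 2)⁻¹)} = F '' T := by
    ext s
    simp only [Set.mem_setOf_eq, Set.mem_image, hT_def]
    constructor
    · rintro ⟨hs0, hlt⟩
      rw [hlemA s hs0] at hlt
      exact ⟨H s, ⟨hHnonneg s, hlt⟩, (hHinv s hs0).2⟩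
    · rintro ⟨x, ⟨hx0, hxt⟩, rfl⟩
      refine ⟨hFnonneg _, ?_⟩
      rw [hlemA _ (hFnonneg x), hHF x hx0]
      exact hxt
  have hηval : η t = F (sInf T) := by
    rw [hη t, hSeq]
    exact (hFmono.map_csInf_of_continuousAt hFcont.continuousAt hTne hTbdd).symm
  rw [hηval, hHF _ (le_csInf hTne (fun x hx => hx.1))]
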